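/- When the monoidal structure on C is cartesian, the category of coend lenses over C is isomorphic to the category of concrete lenses over C (with morphisms (X,S)→(Y,R) given by pairs v : X → Y, u : X × R → S). -/

import Mathlib

open CategoryTheory CategoryTheory.Limits

variable {C : Type u} [Category.{v} C] [HasFiniteProducts C]

/-- A representative of a coend lens `(X,S) → (Y,R)` over a cartesian monoidal
category: `A` with `v : X ⟶ A ⨯ Y` and `u : A ⨯ R ⟶ S`. -/
structure CartLensRep (X S Y R : C) where
  A : C
  v : X ⟶ A ⨯ Y
  u : A ⨯ R ⟶ S

/-- The sliding relation `((f × id) ∘ v, u) ∼ (v, u ∘ (f × id))`. -/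
inductive CartLensRel {X S Y R : C} : CartLensRep X S Y R → CartLensRep X S Y R → Prop
  | slide {A B : C} (f : A ⟶ B) (v : X ⟶ A ⨯ Y) (u : B ⨯ R ⟶ S) :
      CartLensRel ⟨B, v ≫ prod.map f (𝟙 Y), u⟩ ⟨A, v, prod.map f (𝟙 R) ≫ u⟩

/-- Coend lenses over a cartesian category. -/
def CartCoendLens (X S Y R : C) : Type _ :=
  Quot (CartLensRel (X := X) (S := S) (Y := Y) (R := R))

/-- Composition of coend-lens representatives over a cartesian category. -/
noncomputable def CartLensRep.comp {X S Y R Z Q : C}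
    (l : CartLensRep X S Y R) (m : CartLensRep Y R Z Q) : CartLensRep X S Z Q where
  A := l.A ⨯ m.A
  v := l.v ≫ prod.map (𝟙 l.A) m.v ≫ (prod.associator l.A m.A Z).inv
  u := (prod.associator l.A m.A Q).hom ≫ prod.map (𝟙 l.A) m.u ≫ l.u

/-- The identity coend-lens representative. -/
noncomputable def CartLensRep.id (X S : C) : CartLensRep X S X S where
  A := ⊤_ C
  v := prod.lift (terminal.from X) (𝟙 X)
  u := prod.snd

/-- A concrete lens `(X,S) → (Y,R)` over `C`: `v : X ⟶ Y`, `u : X ⨯ R ⟶ S`. -/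
structure CartConLens (X S Y R : C) where
  v : X ⟶ Y
  u : X ⨯ R ⟶ S

/-- Composition of concrete lenses over `C`. -/
noncomputable def CartConLens.comp {X S Y R Z Q : C}
    (l : CartConLens X S Y R) (m : CartConLens Y R Z Q) : CartConLens X S Z Q where
  v := l.v ≫ m.v
  u := prod.lift prod.fst (prod.map l.v (𝟙 Q) ≫ m.u) ≫ l.u

/-- The identity concrete lens over `C`. -/
noncomputable def CartConLens.id (X S : C) : CartConLens X S X S where
  v := 𝟙 X
  u := prod.snd

/-- Map a coend-lens representative to a concrete lens. -/
noncomputable def CartLensRep.toCon {X S Y R : C} (l : CartLensRep X S Y R) :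
    CartConLens X S Y R where
  v := l.v ≫ prod.snd
  u := prod.map (l.v ≫ prod.fst) (𝟙 R) ≫ l.u

/-- Map a concrete lens to a coend-lens representative. -/
noncomputable def CartConLens.toRep {X S Y R : C} (l : CartConLens X S Y R) :
    CartLensRep X S Y R where
  A := X
  v := prod.lift (𝟙 X) l.v
  u := l.u

lemma CartLensRep.toCon_sound {X S Y R : C} {a b : CartLensRep X S Y R}
    (h : CartLensRel a b) : a.toCon = b.toCon := by
  cases h with
  | slide f v u =>
    simp [CartLensRep.toCon, prod.map_map_assoc]

lemma CartLensRep.toRep_toCon {X S Y R : C} (l : CartLensRep X S Y R) :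
    Quot.mk (CartLensRel (X := X) (S := S) (Y := Y) (R := R)) l.toCon.toRep
      = Quot.mk _ l := by
  have h := Quot.sound (CartLensRel.slide (f := l.v ≫ prod.fst)
    (v := prod.lift (𝟙 X) (l.v ≫ prod.snd)) (u := l.u))
  have hv : prod.lift (𝟙 X) (l.v ≫ prod.snd) ≫ prod.map (l.v ≫ prod.fst) (𝟙 Y) = l.v := by
    ext <;> simp [prod.lift_fst, prod.lift_snd, prod.lift_fst_assoc, prod.lift_snd_assoc]
  rw [hv] at h
  exact h.symm.trans rfl

/-- When the monoidal structure is cartesian, the category of coend lenses is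
isomorphic to the category of concrete lenses: both have the same objects
(pairs of objects of `C`), and there are hom-set bijections commuting with
identities and composition. -/
theorem cartesian_coendLens_iso_conLens :
    ∃ e : ∀ X S Y R : C, CartCoendLens X S Y R ≃ CartConLens X S Y R,
      (∀ X S : C, e X S X S (Quot.mk _ (CartLensRep.id X S)) = CartConLens.id X S) ∧
      (∀ (X S Y R Z Q : C) (l : CartLensRep X S Y R) (m : CartLensRep Y R Z Q),
        e X S Z Q (Quot.mk _ (l.comp m)) =
          (e X S Y R (Quot.mk _ l)).comp (e Y R Z Q (Quot.mk _ m))) := by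
  refine ⟨fun X S Y R => {
    toFun := Quot.lift CartLensRep.toCon fun a b h => CartLensRep.toCon_sound h
    invFun := fun l => Quot.mk _ l.toRep
    left_inv := by
      intro q
      induction q using Quot.ind with
      | _ l => exact CartLensRep.toRep_toCon l
    right_inv := by
      intro l
      cases l with
      | mk v u =>
        simp [CartLensRep.toCon, CartConLens.toRep, prod.lift_fst, prod.lift_snd, prod.lift_fst_assoc, prod.lift_snd_assoc] }, ?_, ?_⟩
  · intro X S
    show (CartLensRep.id X S).toCon = CartConLens.id X S
    simp [CartLensRep.toCon, CartLensRep.id, CartConLens.id, prod.map_snd, prod.lift_fst, prod.lift_snd, prod.lift_fst_assoc, prod.lift_snd_assoc]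
    exact (prod.map_snd _ _).trans (Category.comp_id _)
  · intro X S Y R Z Q l m
    simp only [Equiv.coe_fn_mk]
    show (l.comp m).toCon = l.toCon.comp m.toCon
    cases l with
    | mk A v u =>
      cases m with
      | mk B w t =>
        simp only [CartLensRep.comp, CartLensRep.toCon, CartConLens.comp]
        congr 1
        · simp [prod.lift_fst, prod.lift_snd, prod.lift_fst_assoc, prod.lift_snd_assoc]
        · have key :
            prod.map ((v ≫ prod.map (𝟙 A) w ≫ (prod.associator A B Z).inv) ≫ prod.fst) (𝟙 Q) ≫
                (prod.associator A B Q).hom ≫ prod.map (𝟙 A) t =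
              prod.lift prod.fst
                  (prod.map (v ≫ prod.snd) (𝟙 Q) ≫ prod.map (w ≫ prod.fst) (𝟙 Q) ≫ t) ≫
                prod.map (v ≫ prod.fst) (𝟙 R) := by
            have hl : (prod.lift (prod.fst ≫ prod.snd) prod.snd : (A ⨯ B) ⨯ Q ⟶ B ⨯ Q) =
                prod.map prod.snd (𝟙 Q) := by ext <;> simp [prod.lift_fst, prod.lift_snd, prod.lift_fst_assoc, prod.lift_snd_assoc]
            ext <;> simp [hl, prod.map_map_assoc, prod.lift_fst, prod.lift_snd, prod.lift_fst_assoc, prod.lift_snd_assoc]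
          calc prod.map ((v ≫ prod.map (𝟙 A) w ≫ (prod.associator A B Z).inv) ≫ prod.fst) (𝟙 Q) ≫
                (prod.associator A B Q).hom ≫ prod.map (𝟙 A) t ≫ u
              = (prod.map ((v ≫ prod.map (𝟙 A) w ≫ (prod.associator A B Z).inv) ≫ prod.fst)
                  (𝟙 Q) ≫ (prod.associator A B Q).hom ≫ prod.map (𝟙 A) t) ≫ u := by
                simp only [Category.assoc]
            _ = (prod.lift prod.fst
                  (prod.map (v ≫ prod.snd) (𝟙 Q) ≫ prod.map (w ≫ prod.fst) (𝟙 Q) ≫ t) ≫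
                prod.map (v ≫ prod.fst) (𝟙 R)) ≫ u := by rw [key]
            _ = _ := by simp only [Category.assoc]
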